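/- The Lagrangian L_II(x, x', x'') = (x'')²/2 − x(5x²/3 + r₁/2)x'' + x(x⁵ + (r₁/2)x³ + r₂) yields, via the fourth-order Euler–Lagrange equation d²/dt²(∂L/∂x'') − d/dt(∂L/∂x') + ∂L/∂x = 0 evaluated on a smooth function x(t), the equation x'''' − (10x² + r₁)x'' + 6x⁵ + 2r₁x³ − 10x(x')² + r₂ = 0. -/

import Mathlib

/-- The Lagrangian `L_II(x,x',x'') = (x'')²/2 − x(5x²/3 + r₁/2)x'' + x(x⁵ + (r₁/2)x³ + r₂)`
yields, via the second-order Euler–Lagrange expression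
`∂L/∂x − d/dt(∂L/∂x') + d²/dt²(∂L/∂x'')`, the equation
`x'''' − (10x² + r₁)x'' + 6x⁵ + 2r₁x³ − 10x(x')² + r₂ = 0`. -/
theorem stmt16 (r1 r2 : ℝ) (x : ℝ → ℝ) (hx : ContDiff ℝ 4 x)
    (L : ℝ → ℝ → ℝ → ℝ)
    (hL : ∀ a b c, L a b c = c ^ 2 / 2 - a * (5 * a ^ 2 / 3 + r1 / 2) * c
      + a * (a ^ 5 + r1 / 2 * a ^ 3 + r2))
    (t : ℝ) :
    deriv (fun a => L a (deriv x t) (iteratedDeriv 2 x t)) (x t)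
      - deriv (fun s => deriv (fun b => L (x s) b (iteratedDeriv 2 x s)) (deriv x s)) t
      + iteratedDeriv 2
          (fun s => deriv (fun c => L (x s) (deriv x s) c) (iteratedDeriv 2 x s)) t
    = iteratedDeriv 4 x t - (10 * (x t) ^ 2 + r1) * iteratedDeriv 2 x t
        + 6 * (x t) ^ 5 + 2 * r1 * (x t) ^ 3 - 10 * x t * (deriv x t) ^ 2 + r2 := by
  have d0 : Differentiable ℝ x := hx.differentiable (by norm_num)
  have d1 : Differentiable ℝ (deriv x) := by
    have h := hx.differentiable_iteratedDeriv 1 (by norm_num)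
    rwa [iteratedDeriv_one] at h
  have d2 : Differentiable ℝ (iteratedDeriv 2 x) := hx.differentiable_iteratedDeriv 2 (by norm_num)
  have d3 : Differentiable ℝ (iteratedDeriv 3 x) := hx.differentiable_iteratedDeriv 3 (by norm_num)
  have H1 : ∀ s, HasDerivAt x (deriv x s) s := fun s => (d0 s).hasDerivAt
  have H2 : ∀ s, HasDerivAt (deriv x) (iteratedDeriv 2 x s) s := fun s => by
    have h := (d1 s).hasDerivAt
    rwa [show deriv (deriv x) = iteratedDeriv 2 x from by
      rw [iteratedDeriv_succ, iteratedDeriv_one]] at h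
  have H3 : ∀ s, HasDerivAt (iteratedDeriv 2 x) (iteratedDeriv 3 x s) s := fun s => by
    have h := (d2 s).hasDerivAt
    rwa [show deriv (iteratedDeriv 2 x) = iteratedDeriv 3 x from iteratedDeriv_succ.symm] at h
  have H4 : ∀ s, HasDerivAt (iteratedDeriv 3 x) (iteratedDeriv 4 x s) s := fun s => by
    have h := (d3 s).hasDerivAt
    rwa [show deriv (iteratedDeriv 3 x) = iteratedDeriv 4 x from iteratedDeriv_succ.symm] at h
  -- Term 1 : ∂L/∂x
  have T1 : deriv (fun a => L a (deriv x t) (iteratedDeriv 2 x t)) (x t)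
      = -((5 * (x t) ^ 2 + r1 / 2) * iteratedDeriv 2 x t)
        + (6 * (x t) ^ 5 + 2 * r1 * (x t) ^ 3 + r2) := by
    simp only [hL]
    set p := x t
    have h := ((hasDerivAt_const p (iteratedDeriv 2 x t ^ 2 / 2)).sub
        (((hasDerivAt_id' p).mul
          (((((hasDerivAt_id' p).pow 2).const_mul 5).div_const 3).add_const (r1 / 2))).mul_const
            (iteratedDeriv 2 x t))).add
      ((hasDerivAt_id' p).mul
        ((((hasDerivAt_id' p).pow 5).add
          (((hasDerivAt_id' p).pow 3).const_mul (r1 / 2))).add_const r2))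
    simp only [Pi.add_def, Pi.sub_def, Pi.mul_def, Pi.pow_def] at h
    rw [h.deriv]
    push_cast
    ring
  -- Term 2 : ∂L/∂x' = 0
  have T2 : (fun s => deriv (fun b => L (x s) b (iteratedDeriv 2 x s)) (deriv x s))
      = fun _ => (0 : ℝ) := by
    funext s
    simp only [hL]
    exact deriv_const _ _
  -- Term 3 inner : ∂L/∂x''
  have T3fun : (fun s => deriv (fun c => L (x s) (deriv x s) c) (iteratedDeriv 2 x s))
      = fun s => iteratedDeriv 2 x s - x s * (5 * x s ^ 2 / 3 + r1 / 2) := by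
    funext s
    simp only [hL]
    have h := ((((hasDerivAt_id' (iteratedDeriv 2 x s)).pow 2).div_const 2).sub
        ((hasDerivAt_id' (iteratedDeriv 2 x s)).const_mul
          (x s * (5 * x s ^ 2 / 3 + r1 / 2)))).add_const
      (x s * (x s ^ 5 + r1 / 2 * x s ^ 3 + r2))
    rw [show (fun c : ℝ => c ^ 2 / 2 - x s * (5 * x s ^ 2 / 3 + r1 / 2) * c
        + x s * (x s ^ 5 + r1 / 2 * x s ^ 3 + r2))
        = fun c : ℝ => c ^ 2 / 2 - x s * (5 * x s ^ 2 / 3 + r1 / 2) * c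
        + x s * (x s ^ 5 + r1 / 2 * x s ^ 3 + r2) from rfl]
    simp only [Pi.add_def, Pi.sub_def, Pi.mul_def, Pi.pow_def] at h
    rw [h.deriv]
    push_cast
    ring
  rw [T3fun]
  -- first derivative of the ∂L/∂x'' term
  have hg : deriv (fun s => iteratedDeriv 2 x s - x s * (5 * x s ^ 2 / 3 + r1 / 2))
      = fun s => iteratedDeriv 3 x s
        - (deriv x s * (5 * x s ^ 2 / 3 + r1 / 2) + x s * (10 * x s * deriv x s / 3)) := by
    funext s
    have h := (H3 s).sub ((H1 s).mul
      (((((H1 s).pow 2).const_mul 5).div_const 3).add_const (r1 / 2)))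
    simp only [Pi.add_def, Pi.sub_def, Pi.mul_def, Pi.pow_def] at h
    rw [h.deriv]
    push_cast
    ring
  have T3 : iteratedDeriv 2
      (fun s => iteratedDeriv 2 x s - x s * (5 * x s ^ 2 / 3 + r1 / 2)) t
      = iteratedDeriv 4 x t - (5 * (x t) ^ 2 + r1 / 2) * iteratedDeriv 2 x t
        - 10 * x t * (deriv x t) ^ 2 := by
    rw [iteratedDeriv_succ, iteratedDeriv_one, hg]
    have h := (H4 t).sub
      (((H2 t).mul ((((H1 t).pow 2).const_mul 5).div_const 3 |>.add_const (r1 / 2))).add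
        ((H1 t).mul ((((H1 t).const_mul 10).mul (H2 t)).div_const 3)))
    simp only [Pi.add_def, Pi.sub_def, Pi.mul_def, Pi.pow_def] at h
    rw [h.deriv]
    push_cast
    ring
  rw [T1, T2, T3, deriv_const]
  ring
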